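/- With notation as above (v ≥ 2, A = Id + J, B = −(Id + J), M = (2/(v-1))(Id+J)), the sum over pairs of 4-tuples differing in exactly the first three coordinates (i₄ = j₄) of (F(i)−F(j))(F(i)−F(j))ᵀ equals 2(v-1)³ A^{⊗4} − 2 B^{⊗3} ⊗ A = (1/8)v(v-1)⁴(v²−3v+3) M^{⊗4}. -/
import Mathlib


open Kronecker

/-- Effects-type coding of a `v`-level factor. -/
def eff (v : ℕ) (i : Fin v) : Fin (v - 1) → ℝ :=
  fun j => if (i : ℕ) = v - 1 then -1 else if (i : ℕ) = (j : ℕ) then 1 else 0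

/-- All-ones matrix. -/
def Jmat (v : ℕ) : Matrix (Fin (v - 1)) (Fin (v - 1)) ℝ := Matrix.of fun _ _ => 1

/-- `A = Id + J = ∑ᵢ f(i)f(i)ᵀ`. -/
noncomputable def Amat (v : ℕ) : Matrix (Fin (v - 1)) (Fin (v - 1)) ℝ := 1 + Jmat v

/-- `B = -(Id + J) = ∑_{i≠j} f(i)f(j)ᵀ`. -/
noncomputable def Bmat (v : ℕ) : Matrix (Fin (v - 1)) (Fin (v - 1)) ℝ := -(1 + Jmat v)

/-- One-way layout information matrix `M = (2/(v-1))(Id + J)`. -/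
noncomputable def Mmat (v : ℕ) : Matrix (Fin (v - 1)) (Fin (v - 1)) ℝ :=
  (2 / ((v : ℝ) - 1)) • ((1 : Matrix (Fin (v - 1)) (Fin (v - 1)) ℝ) + Jmat v)

/-- `F(i) = f(i₁) ⊗ f(i₂) ⊗ f(i₃) ⊗ f(i₄)` (Kronecker product of vectors). -/
def Fvec (v : ℕ) (i : Fin v × Fin v × Fin v × Fin v) :
    ((Fin (v - 1) × Fin (v - 1)) × Fin (v - 1)) × Fin (v - 1) → ℝ :=
  fun p => eff v i.1 p.1.1.1 * eff v i.2.1 p.1.1.2 * eff v i.2.2.1 p.1.2 * eff v i.2.2.2 p.2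

section Aux

variable {v : ℕ}

lemma eff_decomp (hv : 2 ≤ v) (i : Fin v) (a : Fin (v-1)) :
    eff v i a = (if i = (⟨v-1, by omega⟩ : Fin v) then (-1:ℝ) else 0)
      + (if i = (⟨(a:ℕ), lt_of_lt_of_le a.isLt (Nat.sub_le v 1)⟩ : Fin v) then 1 else 0) := by
  have ha : (a:ℕ) < v - 1 := a.isLt
  unfold eff
  split_ifs <;> simp_all [Fin.ext_iff] <;> omega

lemma sum_eff (hv : 2 ≤ v) (a : Fin (v-1)) : ∑ i : Fin v, eff v i a = 0 := by
  simp only [eff_decomp hv _ a, Finset.sum_add_distrib, Finset.sum_ite_eq',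
    Finset.mem_univ, if_true]
  ring

lemma eff_mul_decomp (hv : 2 ≤ v) (i : Fin v) (a b : Fin (v-1)) :
    eff v i a * eff v i b = (if i = (⟨v-1, by omega⟩ : Fin v) then (1:ℝ) else 0)
      + (if i = (⟨(a:ℕ), lt_of_lt_of_le a.isLt (Nat.sub_le v 1)⟩ : Fin v) ∧ a = b
          then 1 else 0) := by
  have ha : (a:ℕ) < v - 1 := a.isLt
  have hb : (b:ℕ) < v - 1 := b.isLt
  unfold eff
  split_ifs <;> simp_all [Fin.ext_iff] <;> omega

lemma Amat_apply (a b : Fin (v-1)) : Amat v a b = (if a = b then (1:ℝ) else 0) + 1 := by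
  simp [Amat, Jmat, Matrix.one_apply]

lemma Bmat_apply (a b : Fin (v-1)) : Bmat v a b = -(Amat v a b) := rfl

lemma Mmat_apply (a b : Fin (v-1)) : Mmat v a b = (2 / ((v:ℝ) - 1)) * Amat v a b := rfl

lemma sum_eff_mul (hv : 2 ≤ v) (a b : Fin (v-1)) :
    ∑ i : Fin v, eff v i a * eff v i b = Amat v a b := by
  simp only [eff_mul_decomp hv _ a b, Finset.sum_add_distrib, Finset.sum_ite_eq',
    Finset.mem_univ, if_true, Amat_apply]
  by_cases h : a = b <;> simp [h, add_comm]

lemma sum_ne_split (h : Fin v → Fin v → ℝ) :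
    ∑ a : Fin v, ∑ b : Fin v, (if a ≠ b then h a b else 0)
      = (∑ a : Fin v, ∑ b : Fin v, h a b) - ∑ a : Fin v, h a a := by
  have : ∀ a b : Fin v, (if a ≠ b then h a b else 0) = h a b - (if a = b then h a b else 0) := by
    intro a b; split_ifs <;> simp_all
  simp only [this, Finset.sum_sub_distrib, Finset.sum_ite_eq, Finset.mem_univ, if_true]

lemma sum_eq_diag (h : Fin v → Fin v → ℝ) :
    ∑ a : Fin v, ∑ b : Fin v, (if a = b then h a b else 0) = ∑ a : Fin v, h a a := by
  simp [Finset.sum_ite_eq]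

lemma sum_const_double (g : Fin v → ℝ) :
    ∑ a : Fin v, ∑ _b : Fin v, g a = (v : ℝ) * ∑ a : Fin v, g a := by
  simp [Finset.sum_const, mul_comm, ← Finset.sum_mul]

lemma sum_mul_double (g1 g2 : Fin v → ℝ) :
    ∑ a : Fin v, ∑ b : Fin v, g1 a * g2 b = (∑ a, g1 a) * (∑ b, g2 b) := by
  rw [← Finset.sum_mul_sum]

end Aux

section Factor

variable {α β γ δ : Type*} [Fintype α] [Fintype β] [Fintype γ] [Fintype δ]

lemma sum_factor4' (g1 : α → ℝ) (g2 : β → ℝ) (g3 : γ → ℝ) (g4 : δ → ℝ) :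
    ∑ x : α × β × γ × δ, g1 x.1 * g2 x.2.1 * g3 x.2.2.1 * g4 x.2.2.2
      = (∑ a, g1 a) * (∑ b, g2 b) * (∑ c, g3 c) * (∑ d, g4 d) := by
  simp only [Fintype.sum_prod_type, mul_assoc, ← Finset.mul_sum, ← Finset.sum_mul]

def pairEquiv (α : Type*) :
    ((α × α) × (α × α) × (α × α) × (α × α)) ≃ ((α × α × α × α) × (α × α × α × α)) where
  toFun x := ((x.1.1, x.2.1.1, x.2.2.1.1, x.2.2.2.1), (x.1.2, x.2.1.2, x.2.2.1.2, x.2.2.2.2))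
  invFun p := ((p.1.1, p.2.1), (p.1.2.1, p.2.2.1), (p.1.2.2.1, p.2.2.2.1), (p.1.2.2.2, p.2.2.2.2))
  left_inv _ := rfl
  right_inv _ := rfl

lemma sum_factor4 (h1 h2 h3 h4 : α → α → ℝ) :
    ∑ i : α × α × α × α, ∑ j : α × α × α × α,
      h1 i.1 j.1 * h2 i.2.1 j.2.1 * h3 i.2.2.1 j.2.2.1 * h4 i.2.2.2 j.2.2.2
    = (∑ a, ∑ b, h1 a b) * (∑ a, ∑ b, h2 a b) * (∑ a, ∑ b, h3 a b) * (∑ a, ∑ b, h4 a b) := by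
  calc ∑ i : α × α × α × α, ∑ j : α × α × α × α,
        h1 i.1 j.1 * h2 i.2.1 j.2.1 * h3 i.2.2.1 j.2.2.1 * h4 i.2.2.2 j.2.2.2
      = ∑ p : (α × α × α × α) × (α × α × α × α),
          h1 p.1.1 p.2.1 * h2 p.1.2.1 p.2.2.1 * h3 p.1.2.2.1 p.2.2.2.1 * h4 p.1.2.2.2 p.2.2.2.2 :=
        (Fintype.sum_prod_type' _).symm
    _ = ∑ x : (α × α) × (α × α) × (α × α) × (α × α),
          h1 x.1.1 x.1.2 * h2 x.2.1.1 x.2.1.2 * h3 x.2.2.1.1 x.2.2.1.2 * h4 x.2.2.2.1 x.2.2.2.2 :=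
        (Fintype.sum_equiv (pairEquiv α) _ _ (fun x => rfl)).symm
    _ = (∑ y : α × α, h1 y.1 y.2) * (∑ y : α × α, h2 y.1 y.2) * (∑ y : α × α, h3 y.1 y.2)
          * (∑ y : α × α, h4 y.1 y.2) :=
        sum_factor4' (fun y : α × α => h1 y.1 y.2) (fun y : α × α => h2 y.1 y.2)
          (fun y : α × α => h3 y.1 y.2) (fun y : α × α => h4 y.1 y.2)
    _ = _ := by simp only [Fintype.sum_prod_type']

lemma ite_and4 {c1 c2 c3 c4 : Prop} [Decidable c1] [Decidable c2] [Decidable c3] [Decidable c4]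
    (x1 x2 x3 x4 : ℝ) :
    (if c1 ∧ c2 ∧ c3 ∧ c4 then x1 * x2 * x3 * x4 else 0)
      = (if c1 then x1 else 0) * (if c2 then x2 else 0) * (if c3 then x3 else 0)
        * (if c4 then x4 else 0) := by
  split_ifs <;> simp_all

lemma split_sum (t1 t2 t3 t4 : α → α → ℝ) [DecidableEq α] :
    ∑ i : α × α × α × α, ∑ j : α × α × α × α,
      (if i.1 ≠ j.1 ∧ i.2.1 ≠ j.2.1 ∧ i.2.2.1 ≠ j.2.2.1 ∧ i.2.2.2 = j.2.2.2 then
        t1 i.1 j.1 * t2 i.2.1 j.2.1 * t3 i.2.2.1 j.2.2.1 * t4 i.2.2.2 j.2.2.2 else 0)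
    = (∑ a, ∑ b, if a ≠ b then t1 a b else 0) * (∑ a, ∑ b, if a ≠ b then t2 a b else 0)
      * (∑ a, ∑ b, if a ≠ b then t3 a b else 0) * (∑ a, ∑ b, if a = b then t4 a b else 0) := by
  rw [← sum_factor4]
  exact Finset.sum_congr rfl fun i _ => Finset.sum_congr rfl fun j _ => ite_and4 _ _ _ _

end Factor

section Entry

variable {v : ℕ}

lemma ite_entry {m n : Type*} (c : Prop) [Decidable c] (M : Matrix m n ℝ) (p : m) (q : n) :
    (if c then M else 0) p q = if c then M p q else 0 := by
  split_ifs <;> simp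

-- the four scalar double sums
lemma S_ne_diag_i (hv : 2 ≤ v) (p q : Fin (v-1)) :
    ∑ a : Fin v, ∑ b : Fin v, (if a ≠ b then eff v a p * eff v a q else 0)
      = ((v:ℝ) - 1) * Amat v p q := by
  rw [sum_ne_split, sum_const_double, sum_eff_mul hv]
  ring

lemma S_ne_diag_j (hv : 2 ≤ v) (p q : Fin (v-1)) :
    ∑ a : Fin v, ∑ b : Fin v, (if a ≠ b then eff v b p * eff v b q else 0)
      = ((v:ℝ) - 1) * Amat v p q := by
  rw [sum_ne_split]
  have : ∑ a : Fin v, ∑ b : Fin v, eff v b p * eff v b q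
      = (v:ℝ) * ∑ b : Fin v, eff v b p * eff v b q := by
    simp [Finset.sum_const, mul_comm, ← Finset.sum_mul]
  rw [this, sum_eff_mul hv]
  ring

lemma S_ne_cross (hv : 2 ≤ v) (p q : Fin (v-1)) :
    ∑ a : Fin v, ∑ b : Fin v, (if a ≠ b then eff v a p * eff v b q else 0)
      = Bmat v p q := by
  rw [sum_ne_split, sum_mul_double, sum_eff hv, sum_eff_mul hv, Bmat_apply]
  ring

lemma S_ne_cross' (hv : 2 ≤ v) (p q : Fin (v-1)) :
    ∑ a : Fin v, ∑ b : Fin v, (if a ≠ b then eff v b p * eff v a q else 0)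
      = Bmat v p q := by
  rw [sum_ne_split]
  have h1 : ∑ a : Fin v, ∑ b : Fin v, eff v b p * eff v a q
      = (∑ a : Fin v, eff v a q) * (∑ b : Fin v, eff v b p) := by
    rw [← sum_mul_double]
    exact Finset.sum_congr rfl fun a _ => Finset.sum_congr rfl fun b _ => mul_comm _ _
  rw [h1, sum_eff hv, sum_eff_mul hv, Bmat_apply]
  ring

lemma S_eq (hv : 2 ≤ v) (p q : Fin (v-1)) (t : Fin v → Fin v → ℝ)
    (h : ∀ a : Fin v, t a a = eff v a p * eff v a q) :
    ∑ a : Fin v, ∑ b : Fin v, (if a = b then t a b else 0) = Amat v p q := by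
  rw [sum_eq_diag]
  rw [Finset.sum_congr rfl fun a _ => h a]
  exact sum_eff_mul hv p q

end Entry

theorem stmt_6 (v : ℕ) (hv : 2 ≤ v) :
    (∑ i : Fin v × Fin v × Fin v × Fin v, ∑ j : Fin v × Fin v × Fin v × Fin v,
        if i.1 ≠ j.1 ∧ i.2.1 ≠ j.2.1 ∧ i.2.2.1 ≠ j.2.2.1 ∧ i.2.2.2 = j.2.2.2 then
          Matrix.vecMulVec (Fvec v i - Fvec v j) (Fvec v i - Fvec v j) else 0)
      = (2 * ((v : ℝ) - 1) ^ 3) • (Amat v ⊗ₖ Amat v ⊗ₖ Amat v ⊗ₖ Amat v)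
        - (2 : ℝ) • (Bmat v ⊗ₖ Bmat v ⊗ₖ Bmat v ⊗ₖ Amat v) ∧
    (2 * ((v : ℝ) - 1) ^ 3) • (Amat v ⊗ₖ Amat v ⊗ₖ Amat v ⊗ₖ Amat v)
        - (2 : ℝ) • (Bmat v ⊗ₖ Bmat v ⊗ₖ Bmat v ⊗ₖ Amat v)
      = ((1 / 8) * (v : ℝ) * ((v : ℝ) - 1) ^ 4
            * ((v : ℝ) ^ 2 - 3 * (v : ℝ) + 3)) •
          (Mmat v ⊗ₖ Mmat v ⊗ₖ Mmat v ⊗ₖ Mmat v) := by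
  have hv1 : ((v:ℝ) - 1) ≠ 0 := by
    have : (2:ℝ) ≤ (v:ℝ) := by exact_mod_cast hv
    linarith
  constructor
  · ext p q
    simp only [Matrix.sum_apply, ite_entry, Matrix.vecMulVec_apply, Pi.sub_apply]
    have expand : ∀ i j : Fin v × Fin v × Fin v × Fin v,
        (if i.1 ≠ j.1 ∧ i.2.1 ≠ j.2.1 ∧ i.2.2.1 ≠ j.2.2.1 ∧ i.2.2.2 = j.2.2.2 then
            (Fvec v i p - Fvec v j p) * (Fvec v i q - Fvec v j q) else 0)
        = (if i.1 ≠ j.1 ∧ i.2.1 ≠ j.2.1 ∧ i.2.2.1 ≠ j.2.2.1 ∧ i.2.2.2 = j.2.2.2 then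
            Fvec v i p * Fvec v i q else 0)
          + (if i.1 ≠ j.1 ∧ i.2.1 ≠ j.2.1 ∧ i.2.2.1 ≠ j.2.2.1 ∧ i.2.2.2 = j.2.2.2 then
            Fvec v j p * Fvec v j q else 0)
          - (if i.1 ≠ j.1 ∧ i.2.1 ≠ j.2.1 ∧ i.2.2.1 ≠ j.2.2.1 ∧ i.2.2.2 = j.2.2.2 then
            Fvec v i p * Fvec v j q else 0)
          - (if i.1 ≠ j.1 ∧ i.2.1 ≠ j.2.1 ∧ i.2.2.1 ≠ j.2.2.1 ∧ i.2.2.2 = j.2.2.2 then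
            Fvec v j p * Fvec v i q else 0) := by
      intro i j; split_ifs <;> ring
    simp only [expand, Finset.sum_add_distrib, Finset.sum_sub_distrib]
    have T1 : ∑ i : Fin v × Fin v × Fin v × Fin v, ∑ j : Fin v × Fin v × Fin v × Fin v,
        (if i.1 ≠ j.1 ∧ i.2.1 ≠ j.2.1 ∧ i.2.2.1 ≠ j.2.2.1 ∧ i.2.2.2 = j.2.2.2 then
          Fvec v i p * Fvec v i q else 0)
        = (((v:ℝ)-1) * Amat v p.1.1.1 q.1.1.1) * (((v:ℝ)-1) * Amat v p.1.1.2 q.1.1.2)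
          * (((v:ℝ)-1) * Amat v p.1.2 q.1.2) * Amat v p.2 q.2 := by
      rw [Finset.sum_congr rfl fun i _ => Finset.sum_congr rfl fun j _ =>
        if_congr Iff.rfl (show Fvec v i p * Fvec v i q
          = (eff v i.1 p.1.1.1 * eff v i.1 q.1.1.1) * (eff v i.2.1 p.1.1.2 * eff v i.2.1 q.1.1.2)
            * (eff v i.2.2.1 p.1.2 * eff v i.2.2.1 q.1.2)
            * (eff v i.2.2.2 p.2 * eff v i.2.2.2 q.2) from by simp only [Fvec]; ring) rfl]
      rw [split_sum (fun a b => eff v a p.1.1.1 * eff v a q.1.1.1)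
        (fun a b => eff v a p.1.1.2 * eff v a q.1.1.2)
        (fun a b => eff v a p.1.2 * eff v a q.1.2)
        (fun a b => eff v a p.2 * eff v a q.2)]
      rw [S_ne_diag_i hv, S_ne_diag_i hv, S_ne_diag_i hv,
        S_eq hv _ _ _ (fun a => rfl)]
    have T2 : ∑ i : Fin v × Fin v × Fin v × Fin v, ∑ j : Fin v × Fin v × Fin v × Fin v,
        (if i.1 ≠ j.1 ∧ i.2.1 ≠ j.2.1 ∧ i.2.2.1 ≠ j.2.2.1 ∧ i.2.2.2 = j.2.2.2 then
          Fvec v j p * Fvec v j q else 0)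
        = (((v:ℝ)-1) * Amat v p.1.1.1 q.1.1.1) * (((v:ℝ)-1) * Amat v p.1.1.2 q.1.1.2)
          * (((v:ℝ)-1) * Amat v p.1.2 q.1.2) * Amat v p.2 q.2 := by
      rw [Finset.sum_congr rfl fun i _ => Finset.sum_congr rfl fun j _ =>
        if_congr Iff.rfl (show Fvec v j p * Fvec v j q
          = (eff v j.1 p.1.1.1 * eff v j.1 q.1.1.1) * (eff v j.2.1 p.1.1.2 * eff v j.2.1 q.1.1.2)
            * (eff v j.2.2.1 p.1.2 * eff v j.2.2.1 q.1.2)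
            * (eff v j.2.2.2 p.2 * eff v j.2.2.2 q.2) from by simp only [Fvec]; ring) rfl]
      rw [split_sum (fun a b => eff v b p.1.1.1 * eff v b q.1.1.1)
        (fun a b => eff v b p.1.1.2 * eff v b q.1.1.2)
        (fun a b => eff v b p.1.2 * eff v b q.1.2)
        (fun a b => eff v b p.2 * eff v b q.2)]
      rw [S_ne_diag_j hv, S_ne_diag_j hv, S_ne_diag_j hv,
        S_eq hv _ _ _ (fun a => rfl)]
    have T3 : ∑ i : Fin v × Fin v × Fin v × Fin v, ∑ j : Fin v × Fin v × Fin v × Fin v,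
        (if i.1 ≠ j.1 ∧ i.2.1 ≠ j.2.1 ∧ i.2.2.1 ≠ j.2.2.1 ∧ i.2.2.2 = j.2.2.2 then
          Fvec v i p * Fvec v j q else 0)
        = Bmat v p.1.1.1 q.1.1.1 * Bmat v p.1.1.2 q.1.1.2
          * Bmat v p.1.2 q.1.2 * Amat v p.2 q.2 := by
      rw [Finset.sum_congr rfl fun i _ => Finset.sum_congr rfl fun j _ =>
        if_congr Iff.rfl (show Fvec v i p * Fvec v j q
          = (eff v i.1 p.1.1.1 * eff v j.1 q.1.1.1) * (eff v i.2.1 p.1.1.2 * eff v j.2.1 q.1.1.2)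
            * (eff v i.2.2.1 p.1.2 * eff v j.2.2.1 q.1.2)
            * (eff v i.2.2.2 p.2 * eff v j.2.2.2 q.2) from by simp only [Fvec]; ring) rfl]
      rw [split_sum (fun a b => eff v a p.1.1.1 * eff v b q.1.1.1)
        (fun a b => eff v a p.1.1.2 * eff v b q.1.1.2)
        (fun a b => eff v a p.1.2 * eff v b q.1.2)
        (fun a b => eff v a p.2 * eff v b q.2)]
      rw [S_ne_cross hv, S_ne_cross hv, S_ne_cross hv,
        S_eq hv _ _ _ (fun a => rfl)]
    have T4 : ∑ i : Fin v × Fin v × Fin v × Fin v, ∑ j : Fin v × Fin v × Fin v × Fin v,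
        (if i.1 ≠ j.1 ∧ i.2.1 ≠ j.2.1 ∧ i.2.2.1 ≠ j.2.2.1 ∧ i.2.2.2 = j.2.2.2 then
          Fvec v j p * Fvec v i q else 0)
        = Bmat v p.1.1.1 q.1.1.1 * Bmat v p.1.1.2 q.1.1.2
          * Bmat v p.1.2 q.1.2 * Amat v p.2 q.2 := by
      rw [Finset.sum_congr rfl fun i _ => Finset.sum_congr rfl fun j _ =>
        if_congr Iff.rfl (show Fvec v j p * Fvec v i q
          = (eff v j.1 p.1.1.1 * eff v i.1 q.1.1.1) * (eff v j.2.1 p.1.1.2 * eff v i.2.1 q.1.1.2)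
            * (eff v j.2.2.1 p.1.2 * eff v i.2.2.1 q.1.2)
            * (eff v j.2.2.2 p.2 * eff v i.2.2.2 q.2) from by simp only [Fvec]; ring) rfl]
      rw [split_sum (fun a b => eff v b p.1.1.1 * eff v a q.1.1.1)
        (fun a b => eff v b p.1.1.2 * eff v a q.1.1.2)
        (fun a b => eff v b p.1.2 * eff v a q.1.2)
        (fun a b => eff v b p.2 * eff v a q.2)]
      rw [S_ne_cross' hv, S_ne_cross' hv, S_ne_cross' hv,
        S_eq hv _ _ _ (fun a => rfl)]
    rw [T1, T2, T3, T4]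
    simp only [Matrix.sub_apply, Matrix.smul_apply, Matrix.kroneckerMap_apply, smul_eq_mul]
    ring
  · ext p q
    simp only [Matrix.sub_apply, Matrix.smul_apply, Matrix.kroneckerMap_apply, smul_eq_mul,
      Bmat_apply, Mmat_apply]
    field_simp
    ring
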